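/- Let S be a closed subset of a domain Ω ⊆ ℂⁿ with locally finite Hausdorff (2n−2)-measure. Then for each point a ∈ S there exist complex affine coordinates (z, w) ∈ ℂ^{n−1} × ℂ centered at a such that the intersection of S with the line {z = 0} is at most countable. -/

import Mathlib

open MeasureTheory Set ENNReal
open scoped NNReal
noncomputable section

lemma ball_const_lt_top (m : ℕ) : volume (Metric.ball (0 : Fin m → ℂ) 1) ≠ ⊤ :=
  measure_ball_lt_top.ne

lemma vol_closedBall_le (m : ℕ) (x : Fin m → ℂ) (r : ℝ) (hr : 0 ≤ r) :
    volume (Metric.closedBall x r) =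
      ENNReal.ofReal (r ^ (2 * m)) * volume (Metric.ball (0 : Fin m → ℂ) 1) := by
  rw [Measure.addHaar_closedBall _ _ hr]
  congr 2
  simp [Module.finrank_pi_fintype, Complex.finrank_real_complex, Finset.sum_const]; ring

/-- Eilenberg-type lemma: a set of finite `2m`-dimensional Hausdorff measure meets
almost every fiber of a Lipschitz map to `ℂᵐ` in a finite set. -/
lemma eilenberg (m : ℕ) {X : Type} [EMetricSpace X] [MeasurableSpace X] [BorelSpace X]
    (E : Set X) (hE : μH[((2 * m : ℕ) : ℝ)] E ≠ ⊤) (ψ : X → (Fin m → ℂ)) (L : ℝ≥0)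
    (hψ : ∀ x ∈ E, ∀ x' ∈ E, edist (ψ x) (ψ x') ≤ L * edist x x') :
    volume {y : Fin m → ℂ | (E ∩ ψ ⁻¹' {y}).Infinite} = 0 := by
  classical
  set d : ℝ := ((2 * m : ℕ) : ℝ) with hd
  set C : ℝ≥0∞ := volume (Metric.ball (0 : Fin m → ℂ) 1) with hC
  set B : ℝ≥0∞ := (L : ℝ≥0∞) ^ (2 * m) * C * (μH[d] E + 1) with hB
  have hBtop : B ≠ ⊤ := by
    apply ENNReal.mul_ne_top (ENNReal.mul_ne_top (by simp) (ball_const_lt_top m))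
    exact ENNReal.add_ne_top.2 ⟨hE, one_ne_top⟩
  set F : ℕ → ℕ → Set (Fin m → ℂ) := fun N k =>
    {y | ∃ T : Finset X, ↑T ⊆ E ∩ ψ ⁻¹' {y} ∧ T.card = N ∧
      ∀ x ∈ T, ∀ x' ∈ T, x ≠ x' → ((k : ℝ≥0∞))⁻¹ ≤ edist x x'} with hF
  -- monotonicity in k
  have hFmono : ∀ N k k', k ≤ k' → F N k ⊆ F N k' := by
    rintro N k k' hk y ⟨T, h1, h2, h3⟩
    exact ⟨T, h1, h2, fun x hx x' hx' hne =>
      le_trans (ENNReal.inv_le_inv.2 (by exact_mod_cast Nat.cast_le.2 hk)) (h3 x hx x' hx' hne)⟩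
  -- Step A
  have stepA : ∀ N k : ℕ, ((N : ℝ≥0∞) + 1) * volume (F (N + 1) (k + 1)) ≤ B := by
    intro N k
    set r : ℝ≥0∞ := (((k : ℝ≥0∞) + 1))⁻¹ / 2 with hr
    have hrinv0 : (((k : ℝ≥0∞)) + 1) ≠ 0 := by simp
    have hrinvtop : (((k : ℝ≥0∞)) + 1) ≠ ⊤ := by simp
    have hr0 : 0 < r := ENNReal.div_pos (ENNReal.inv_ne_zero.2 hrinvtop) (by simp)
    have hrtop : r ≠ ⊤ := by
      apply (ENNReal.div_lt_top (ENNReal.inv_ne_top.2 hrinv0) two_ne_zero).ne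
    have hrlt : r < ((k : ℝ≥0∞) + 1)⁻¹ :=
      ENNReal.half_lt_self (ENNReal.inv_ne_zero.2 hrinvtop) (ENNReal.inv_ne_top.2 hrinv0)
    -- extract a cover at scale r
    have hiInf : (⨅ (t : ℕ → Set X) (_ : E ⊆ ⋃ n, t n) (_ : ∀ n, EMetric.diam (t n) ≤ r),
        ∑' n, ⨆ _ : (t n).Nonempty, EMetric.diam (t n) ^ d) < μH[d] E + 1 := by
      refine lt_of_le_of_lt ?_ (ENNReal.lt_add_right hE one_ne_zero)
      rw [Measure.hausdorffMeasure_apply]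
      exact le_iSup₂ (f := fun (r : ℝ≥0∞) (_ : 0 < r) =>
        ⨅ (t : ℕ → Set X) (_ : E ⊆ ⋃ n, t n) (_ : ∀ n, EMetric.diam (t n) ≤ r),
          ∑' n, ⨆ _ : (t n).Nonempty, EMetric.diam (t n) ^ d) r hr0
    simp only [iInf_lt_iff] at hiInf
    obtain ⟨t, htE, htdiam, htsum⟩ := hiInf
    set V : ℕ → Set (Fin m → ℂ) := fun i => toMeasurable volume (ψ '' (t i ∩ E)) with hV
    set g : (Fin m → ℂ) → ℝ≥0∞ := fun y => ∑' i, (V i).indicator 1 y with hg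
    have hgmeas : Measurable g :=
      Measurable.ennreal_tsum fun i => measurable_one.indicator (measurableSet_toMeasurable _ _)
    -- claim 1 : F ⊆ superlevel set
    have claim1 : F (N + 1) (k + 1) ⊆ {y | ((N : ℝ≥0∞) + 1) ≤ g y} := by
      rintro y ⟨T, hTsub, hTcard, hTsep⟩
      set f : X → ℕ := fun x => if h : ∃ i, x ∈ t i then h.choose else 0 with hf'
      have hf : ∀ x ∈ T, x ∈ t (f x) := by
        intro x hx
        have hex : ∃ i, x ∈ t i := mem_iUnion.1 (htE (hTsub hx).1)
        simp only [hf', dif_pos hex]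
        exact hex.choose_spec
      have hinj : Set.InjOn f ↑T := by
        intro x hx x' hx' hfe
        by_contra hne
        have h1 : ((k : ℝ≥0∞) + 1)⁻¹ ≤ edist x x' := by
          have := hTsep x hx x' hx' hne
          simpa using this
        have h2 : edist x x' ≤ r := by
          refine le_trans (EMetric.edist_le_diam_of_mem (hf x hx) ?_) (htdiam _)
          rw [hfe]; exact hf x' hx'
        exact absurd (h1.trans_lt (h2.trans_lt hrlt)) (lt_irrefl _)
      set I : Finset ℕ := T.image f with hI
      have hIcard : I.card = N + 1 := by rw [hI, Finset.card_image_of_injOn hinj, hTcard]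
      have hyV : ∀ i ∈ I, y ∈ V i := by
        intro i hi
        obtain ⟨x, hx, rfl⟩ := Finset.mem_image.1 hi
        have hxE : x ∈ E ∩ ψ ⁻¹' {y} := hTsub hx
        have : ψ x = y := hxE.2
        exact subset_toMeasurable _ _ ⟨x, ⟨hf x hx, hxE.1⟩, this⟩
      calc ((N : ℝ≥0∞) + 1) = ∑ _i ∈ I, (1 : ℝ≥0∞) := by
            rw [Finset.sum_const, hIcard]; simp [mul_comm]
        _ = ∑ i ∈ I, (V i).indicator 1 y := by
            refine Finset.sum_congr rfl fun i hi => ?_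
            rw [Set.indicator_of_mem (hyV i hi)]; rfl
        _ ≤ g y := ENNReal.sum_le_tsum I
    -- claim 3 : bound volume of V i
    have claim3 : ∀ i, volume (V i) ≤
        (L : ℝ≥0∞) ^ (2 * m) * C * ⨆ _ : (t i).Nonempty, EMetric.diam (t i) ^ d := by
      intro i
      rw [hV]
      simp only [measure_toMeasurable]
      rcases (t i ∩ E).eq_empty_or_nonempty with he | ⟨x0, hx0⟩
      · simp [he]
      set ρ : ℝ≥0∞ := (L : ℝ≥0∞) * EMetric.diam (t i) with hρ
      have hρtop : ρ ≠ ⊤ :=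
        ENNReal.mul_ne_top coe_ne_top ((htdiam i).trans_lt (lt_top_iff_ne_top.2 hrtop)).ne
      have himg : ψ '' (t i ∩ E) ⊆ Metric.closedBall (ψ x0) ρ.toReal := by
        rintro _ ⟨x, hx, rfl⟩
        rw [Metric.mem_closedBall, dist_edist]
        refine ENNReal.toReal_mono hρtop ?_
        exact le_trans (hψ x hx.2 x0 hx0.2)
          (mul_le_mul_right (EMetric.edist_le_diam_of_mem hx.1 hx0.1) _)
      calc volume (ψ '' (t i ∩ E)) ≤ volume (Metric.closedBall (ψ x0) ρ.toReal) :=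
            measure_mono himg
        _ = ENNReal.ofReal (ρ.toReal ^ (2 * m)) * C := vol_closedBall_le m _ _ ENNReal.toReal_nonneg
        _ = ρ ^ (2 * m) * C := by
            rw [← ENNReal.toReal_pow, ENNReal.ofReal_toReal (ENNReal.pow_ne_top hρtop)]
        _ = (L : ℝ≥0∞) ^ (2 * m) * C * EMetric.diam (t i) ^ d := by
            rw [hρ, mul_pow, hd, ENNReal.rpow_natCast]; ring
        _ ≤ _ := by
            rw [iSup_pos ⟨x0, hx0.1⟩]
    -- put everything together
    calc ((N : ℝ≥0∞) + 1) * volume (F (N + 1) (k + 1))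
        ≤ ((N : ℝ≥0∞) + 1) * volume {y | ((N : ℝ≥0∞) + 1) ≤ g y} := by
          exact mul_le_mul_right (measure_mono claim1) _
      _ ≤ ∫⁻ y, g y := mul_meas_ge_le_lintegral₀ hgmeas.aemeasurable _
      _ = ∑' i, volume (V i) := by
          rw [hg, lintegral_tsum fun i =>
            (measurable_one.indicator (measurableSet_toMeasurable _ _)).aemeasurable]
          simp_rw [lintegral_indicator_one (measurableSet_toMeasurable _ _)]
          rfl
      _ ≤ ∑' i, (L : ℝ≥0∞) ^ (2 * m) * C * ⨆ _ : (t i).Nonempty, EMetric.diam (t i) ^ d :=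
          ENNReal.tsum_le_tsum claim3
      _ = (L : ℝ≥0∞) ^ (2 * m) * C * ∑' i, ⨆ _ : (t i).Nonempty, EMetric.diam (t i) ^ d :=
          ENNReal.tsum_mul_left
      _ ≤ B := by
          rw [hB]
          exact mul_le_mul_right htsum.le _
  -- Step B : the set of y with infinite fiber
  set Y : Set (Fin m → ℂ) := {y | (E ∩ ψ ⁻¹' {y}).Infinite} with hY
  have stepB : ∀ N : ℕ, volume Y ≤ B / ((N : ℝ≥0∞) + 1) := by
    intro N
    have hYsub : Y ⊆ ⋃ k, F (N + 1) (k + 1) := by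
      intro y hy
      obtain ⟨T, hTsub, hTcard⟩ := Set.Infinite.exists_subset_card_eq hy (N + 1)
      have hsep : ∀ p : X × X, ∃ k : ℕ, p.1 ≠ p.2 → ((k : ℝ≥0∞))⁻¹ < edist p.1 p.2 := by
        intro p
        rcases eq_or_ne p.1 p.2 with h | h
        · exact ⟨0, fun hc => absurd h hc⟩
        · obtain ⟨k, hk⟩ := ENNReal.exists_inv_nat_lt ((edist_pos.2 h).ne')
          exact ⟨k, fun _ => hk⟩
      choose κ hκ using hsep
      set k : ℕ := (T ×ˢ T).sup κ with hk
      refine mem_iUnion.2 ⟨k, T, hTsub, hTcard, ?_⟩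
      intro x hx x' hx' hne
      have h1 : κ (x, x') ≤ k + 1 :=
        le_trans (Finset.le_sup (Finset.mem_product.2 ⟨hx, hx'⟩)) (Nat.le_succ k)
      refine le_trans (ENNReal.inv_le_inv.2 (by exact_mod_cast h1)) (hκ (x, x') hne).le
    have hdir : Directed (· ⊆ ·) fun k => F (N + 1) (k + 1) :=
      fun k k' => ⟨max k k', hFmono _ _ _ (by omega), hFmono _ _ _ (by omega)⟩
    calc volume Y ≤ volume (⋃ k, F (N + 1) (k + 1)) := measure_mono hYsub
      _ = ⨆ k, volume (F (N + 1) (k + 1)) := hdir.measure_iUnion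
      _ ≤ B / ((N : ℝ≥0∞) + 1) := by
          refine iSup_le fun k => ?_
          rw [ENNReal.le_div_iff_mul_le (Or.inl (by simp)) (Or.inl (by simp))]
          rw [mul_comm]
          exact stepA N k
  -- conclude
  by_contra h0
  have hc0 : volume Y ≠ 0 := h0
  have hctop : volume Y ≠ ⊤ := by
    intro hc
    have := stepB 0
    rw [hc] at this
    simp [top_le_iff] at this
    exact hBtop this
  obtain ⟨n, hn⟩ := ENNReal.exists_nat_gt (ENNReal.div_lt_top hBtop hc0).ne
  have h1 : B < (n : ℝ≥0∞) * volume Y := by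
    have h1' := (ENNReal.div_lt_iff (Or.inl hc0) (Or.inl hctop)).1 hn
    exact h1'
  have h2 : volume Y * ((n : ℝ≥0∞) + 1) ≤ B :=
    (ENNReal.le_div_iff_mul_le (Or.inl (by simp)) (Or.inl (by simp))).1 (stepB n)
  have h3 : (n : ℝ≥0∞) * volume Y ≤ volume Y * ((n : ℝ≥0∞) + 1) := by
    rw [mul_comm]
    exact mul_le_mul_right le_self_add _
  exact absurd (h1.trans_le (h3.trans h2)) (lt_irrefl _)

lemma myInvLe {a b : ℝ} (ha : 0 < a) (h : a⁻¹ ≤ b) : b⁻¹ ≤ a := by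
  have hb : 0 < b := lt_of_lt_of_le (inv_pos.2 ha) h
  have h1 : a⁻¹ * a = 1 := inv_mul_cancel₀ ha.ne'
  have h2 : b⁻¹ * b = 1 := inv_mul_cancel₀ hb.ne'
  nlinarith [mul_nonneg (mul_nonneg (sub_nonneg.2 h) ha.le) (inv_pos.2 hb).le]

lemma coord_dist {n : ℕ} (x y : EuclideanSpace ℂ (Fin n)) (c : Fin n) :
    dist (x c) (y c) ≤ dist x y := by
  rw [EuclideanSpace.dist_eq]
  rw [show dist (x c) (y c) = Real.sqrt (dist (x c) (y c) ^ 2) from (Real.sqrt_sq dist_nonneg).symm]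
  exact Real.sqrt_le_sqrt (Finset.single_le_sum (f := fun i => dist (x i) (y i) ^ 2)
    (fun i _ => sq_nonneg _) (Finset.mem_univ c))

/-- `ℂⁿ` as a complex Euclidean space. -/
abbrev Cn (n : ℕ) : Type := EuclideanSpace ℂ (Fin n)

/-- Hausdorff measure of dimension `d` on an extended metric space, with the
Borel σ-algebra. -/
def hMeasB (α : Type) [EMetricSpace α] (d : ℝ) : @Measure α (borel α) :=
  @Measure.hausdorffMeasure α _ (borel α) (@BorelSpace.mk α _ (borel α) rfl) d

/-- if `S` is a relatively closed subset of a domain `Ω ⊆ ℂⁿ` with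
locally finite Hausdorff `(2n-2)`-measure, then through each point `a ∈ S`
there is a complex line (i.e. affine coordinates centered at `a` in which the
line is `{z = 0}`) meeting `S` in an at most countable set. -/
theorem stmt3 {n : ℕ} (hn : 1 ≤ n) (Ω : Set (Cn n)) (hΩ : IsOpen Ω)
    (S : Set (Cn n)) (hSΩ : S ⊆ Ω) (hScl : closure S ∩ Ω ⊆ S)
    (hmeas : ∀ K : Set (Cn n), K ⊆ Ω → IsCompact K →
      hMeasB (Cn n) (2 * (n : ℝ) - 2) (S ∩ K) < ⊤) :
    ∀ a ∈ S, ∃ v : Cn n, v ≠ 0 ∧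
      (S ∩ {x : Cn n | ∃ t : ℂ, x = a + t • v}).Countable := by
  intro a ha
  classical
  by_contra hcon
  push_neg at hcon
  set m : ℕ := n - 1 with hm
  have hmn : m < n := by omega
  set ℓ : Fin n := ⟨m, hmn⟩ with hℓ
  set emb : Fin m → Fin n := fun i => ⟨i.1, by omega⟩ with hemb
  set w : Cn n → ℂ := fun x => x ℓ - a ℓ with hw
  set ψ : Cn n → (Fin m → ℂ) := fun x i => (w x)⁻¹ * (x (emb i) - a (emb i)) with hψ
  set v : (Fin m → ℂ) → Cn n := fun y => (WithLp.equiv 2 (Fin n → ℂ)).symm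
      (fun j => if h : (j : ℕ) < m then y ⟨j, h⟩ else 1) with hv
  have hvℓ : ∀ y, v y ℓ = 1 := by
    intro y
    rw [hv]
    change (if h : ((ℓ : ℕ)) < m then y ⟨ℓ, h⟩ else 1) = 1
    rw [dif_neg]
    exact lt_irrefl m
  have hvemb : ∀ y i, v y (emb i) = y i := by
    intro y i
    rw [hv]
    change (if h : (i : ℕ) < m then y ⟨i, h⟩ else 1) = y i
    rw [dif_pos i.2]
  have hvne : ∀ y, v y ≠ 0 := by
    intro y hy
    have h1 : v y ℓ = (0 : Cn n) ℓ := by rw [hy]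
    rw [hvℓ y, PiLp.zero_apply] at h1
    exact one_ne_zero h1
  -- adapted compact exhaustion
  set K : ℕ → Set (Cn n) := fun j =>
    (Metric.closedBall a j ∩ {x | ((j : ℝ≥0∞))⁻¹ ≤ EMetric.infEdist x Ωᶜ}) ∩
      {x | ((j : ℝ))⁻¹ ≤ ‖w x‖} with hK
  have hev : Continuous fun x : Cn n => x ℓ := by
    exact (continuous_apply ℓ).comp (PiLp.continuous_ofLp 2 _)
  have hwcont : Continuous w := by
    rw [hw]; exact hev.sub continuous_const
  have hKΩ : ∀ j, K j ⊆ Ω := by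
    intro j x hx
    by_contra hxo
    have h2 := hx.1.2
    rw [mem_setOf_eq, EMetric.infEdist, EMetric.infEdist_zero_of_mem (by exact hxo), le_zero_iff] at h2
    exact (ENNReal.inv_ne_zero.2 (ENNReal.natCast_ne_top j)) h2
  have hKcomp : ∀ j, IsCompact (K j) := by
    intro j
    refine (((isCompact_closedBall a j).inter_right ?_).inter_right ?_)
    · exact isClosed_le continuous_const EMetric.continuous_infEdist
    · exact isClosed_le continuous_const hwcont.norm
  have hwK : ∀ j : ℕ, ∀ x ∈ K (j+1), (((j:ℝ)+1))⁻¹ ≤ ‖w x‖ ∧ dist x a ≤ (j:ℝ)+1 := by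
    intro j x hx
    constructor
    · have := hx.2
      rw [mem_setOf_eq] at this
      convert this using 2
      push_cast; ring
    · have := Metric.mem_closedBall.1 hx.1.1
      convert this using 1
      push_cast; ring
  have hcover : ∀ x ∈ Ω, w x ≠ 0 → ∃ j : ℕ, x ∈ K (j + 1) := by
    intro x hxΩ hwx
    obtain ⟨j1, hj1⟩ := exists_nat_ge (dist x a)
    have hpos : 0 < EMetric.infEdist x Ωᶜ := by
      rw [EMetric.infEdist, EMetric.infEdist_pos_iff_notMem_closure, hΩ.isClosed_compl.closure_eq]
      simpa using hxΩ
    obtain ⟨j2, hj2⟩ := ENNReal.exists_inv_nat_lt hpos.ne'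
    have hwpos : 0 < ‖w x‖ := norm_pos_iff.2 hwx
    obtain ⟨j3, hj3⟩ := exists_nat_gt (‖w x‖)⁻¹
    refine ⟨j1 + j2 + j3, ⟨?_, ?_⟩, ?_⟩
    · rw [Metric.mem_closedBall]
      refine hj1.trans ?_
      push_cast; linarith
    · rw [mem_setOf_eq]
      refine le_trans ?_ hj2.le
      apply ENNReal.inv_le_inv.2
      exact_mod_cast (by omega : j2 ≤ j1 + j2 + j3 + 1)
    · rw [mem_setOf_eq]
      have h1 : ‖w x‖⁻¹ ≤ ((j1 + j2 + j3 + 1 : ℕ) : ℝ) := by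
        refine hj3.le.trans ?_
        exact_mod_cast (by omega : j3 ≤ j1 + j2 + j3 + 1)
      exact myInvLe hwpos h1
  -- Lipschitz estimate on K (j+1)
  have hLip : ∀ j : ℕ, ∀ x ∈ K (j+1), ∀ x' ∈ K (j+1),
      dist (ψ x) (ψ x') ≤ (((j:ℝ)+1) + ((j:ℝ)+1)^3) * dist x x' := by
    intro j x hx x' hx'
    set J : ℝ := (j:ℝ) + 1 with hJ
    have hJ0 : 0 < J := by positivity
    obtain ⟨hwx, hdx⟩ := hwK j x hx
    obtain ⟨hwx', hdx'⟩ := hwK j x' hx'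
    have hwx0 : w x ≠ 0 := by
      intro h
      rw [h, norm_zero] at hwx
      exact absurd hwx (not_le.2 (inv_pos.2 hJ0))
    have hwx'0 : w x' ≠ 0 := by
      intro h
      rw [h, norm_zero] at hwx'
      exact absurd hwx' (not_le.2 (inv_pos.2 hJ0))
    have hinvx : ‖w x‖⁻¹ ≤ J := myInvLe hJ0 hwx
    have hinvx' : ‖w x'‖⁻¹ ≤ J := myInvLe hJ0 hwx'
    rw [dist_pi_le_iff (by positivity)]
    intro i
    have e1 : ψ x i - ψ x' i = (w x)⁻¹ * (x (emb i) - x' (emb i))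
        + ((w x)⁻¹ - (w x')⁻¹) * (x' (emb i) - a (emb i)) := by
      simp only [hψ]
      ring
    have b1 : ‖x (emb i) - x' (emb i)‖ ≤ dist x x' := by
      rw [← dist_eq_norm]
      exact coord_dist x x' (emb i)
    have b2 : ‖x' (emb i) - a (emb i)‖ ≤ J := by
      rw [← dist_eq_norm]
      exact (coord_dist x' a (emb i)).trans hdx'
    have hnum : ‖w x' - w x‖ ≤ dist x x' := by
      have hsub : w x' - w x = x' ℓ - x ℓ := by rw [hw]; ring
      rw [hsub, ← dist_eq_norm]
      exact (coord_dist x' x ℓ).trans (by rw [dist_comm])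
    have b3 : ‖(w x)⁻¹ - (w x')⁻¹‖ ≤ J^2 * dist x x' := by
      calc ‖(w x)⁻¹ - (w x')⁻¹‖ = ‖w x' - w x‖ * (‖w x‖⁻¹ * ‖w x'‖⁻¹) := by
            rw [inv_sub_inv hwx0 hwx'0, norm_div, norm_mul, div_eq_mul_inv, mul_inv]
        _ ≤ dist x x' * (J * J) := by
            refine mul_le_mul hnum ?_ (by positivity) dist_nonneg
            exact mul_le_mul hinvx hinvx' (by positivity) hJ0.le
        _ = J^2 * dist x x' := by ring
    have hA : ‖(w x)⁻¹ * (x (emb i) - x' (emb i))‖ ≤ J * dist x x' := by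
      rw [norm_mul, norm_inv]
      exact mul_le_mul hinvx b1 (norm_nonneg _) hJ0.le
    have hB : ‖((w x)⁻¹ - (w x')⁻¹) * (x' (emb i) - a (emb i))‖ ≤ (J^2 * dist x x') * J := by
      rw [norm_mul]
      exact mul_le_mul b3 b2 (norm_nonneg _) (by positivity)
    calc dist (ψ x i) (ψ x' i) = ‖ψ x i - ψ x' i‖ := dist_eq_norm _ _
      _ ≤ ‖(w x)⁻¹ * (x (emb i) - x' (emb i))‖
          + ‖((w x)⁻¹ - (w x')⁻¹) * (x' (emb i) - a (emb i))‖ := by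
            rw [e1]; exact norm_add_le _ _
      _ ≤ J * dist x x' + (J^2 * dist x x') * J := add_le_add hA hB
      _ = (J + J^3) * dist x x' := by ring
  -- measure-theoretic part
  letI : MeasurableSpace (Cn n) := borel (Cn n)
  haveI : BorelSpace (Cn n) := ⟨rfl⟩
  have hexp : ((2 * m : ℕ) : ℝ) = 2 * (n : ℝ) - 2 := by
    have h1 : (m : ℝ) = (n : ℝ) - 1 := by
      rw [hm]
      push_cast [Nat.cast_sub hn]
      ring
    push_cast
    rw [h1]; ring
  have hEfin : ∀ j : ℕ, μH[((2 * m : ℕ) : ℝ)] (S ∩ K (j+1)) ≠ ⊤ := by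
    intro j
    rw [hexp]
    exact (hmeas (K (j+1)) (hKΩ _) (hKcomp _)).ne
  have hY : ∀ j : ℕ, volume {y : Fin m → ℂ | ((S ∩ K (j+1)) ∩ ψ ⁻¹' {y}).Infinite} = 0 := by
    intro j
    set Lr : ℝ := ((j:ℝ)+1) + ((j:ℝ)+1)^3 with hLrd
    have hLr0 : (0:ℝ) ≤ Lr := by positivity
    refine eilenberg m _ (hEfin j) ψ (Real.toNNReal Lr) ?_
    intro x hx x' hx'
    calc edist (ψ x) (ψ x') = ENNReal.ofReal (dist (ψ x) (ψ x')) := edist_dist _ _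
      _ ≤ ENNReal.ofReal (Lr * dist x x') :=
          ENNReal.ofReal_le_ofReal (hLip j x hx.2 x' hx'.2)
      _ = ENNReal.ofReal Lr * ENNReal.ofReal (dist x x') := ENNReal.ofReal_mul hLr0
      _ = (Real.toNNReal Lr : ℝ≥0∞) * edist x x' := by rw [edist_dist]; rfl
  have huniv : (univ : Set (Fin m → ℂ)) ⊆
      ⋃ j, {y : Fin m → ℂ | ((S ∩ K (j+1)) ∩ ψ ⁻¹' {y}).Infinite} := by
    intro y _
    by_contra hy
    simp only [mem_iUnion, mem_setOf_eq, not_exists, Set.not_infinite] at hy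
    refine hcon (v y) (hvne y) ?_
    have hsub : S ∩ {x : Cn n | ∃ t : ℂ, x = a + t • v y} ⊆
        {a} ∪ ⋃ j, ((S ∩ K (j+1)) ∩ ψ ⁻¹' {y}) := by
      rintro x ⟨hxS, t, rfl⟩
      rcases eq_or_ne t 0 with rfl | ht
      · left; simp
      · right
        have hwx : w (a + t • v y) = t := by
          rw [hw]
          simp only [PiLp.add_apply, PiLp.smul_apply, smul_eq_mul, hvℓ]
          ring
        have hxΩ : a + t • v y ∈ Ω := hSΩ hxS
        obtain ⟨j, hj⟩ := hcover _ hxΩ (by rw [hwx]; exact ht)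
        refine mem_iUnion.2 ⟨j, ⟨⟨hxS, hj⟩, ?_⟩⟩
        rw [Set.mem_preimage, mem_singleton_iff]
        funext i
        simp only [hψ, hwx, PiLp.add_apply, PiLp.smul_apply, smul_eq_mul, hvemb]
        field_simp
        ring
    exact Set.Countable.mono hsub ((Set.countable_singleton a).union
      (Set.countable_iUnion fun j => (hy j).countable))
  have h0 : volume (univ : Set (Fin m → ℂ)) = 0 :=
    measure_mono_null huniv (measure_iUnion_null fun j => hY j)
  exact absurd h0 (isOpen_univ.measure_ne_zero volume univ_nonempty)
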